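/- The set 𝒯 = {T ⊆ V : T is a town on some level i ∈ ℕ} forms a laminar family: any two of its members are either nested or disjoint. Furthermore, any town T ∈ 𝒯 of level i has either 0 or at least 2 child towns in the laminar order, and every child town of T is a town on a level strictly below i. -/

import Mathlib

open SimpleGraph

universe u

variable {V : Type u}

/-- The length of a walk in a graph `G` with edge lengths `len`. -/
noncomputable def wlen {G : SimpleGraph V} (len : V → V → ℝ) {u v : V} (w : G.Walk u v) : ℝ :=
  (w.darts.map (fun e => len e.toProd.1 e.toProd.2)).sum

/-- A walk is a *shortest path* (w.r.t. the shortest-path metric `d`) if it is a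
path whose total length equals the distance between its endpoints. -/
def IsShortestPath {G : SimpleGraph V} (len d : V → V → ℝ) {u v : V}
    (w : G.Walk u v) : Prop :=
  w.IsPath ∧ wlen len w = d u v

/-- `d` is the shortest-path metric of the graph `G` with edge lengths `len`:
it is a lower bound on the length of every walk, and for every pair of vertices it
is attained by some path (a shortest path). -/
def IsShortestPathMetric (G : SimpleGraph V) (len d : V → V → ℝ) : Prop :=
  (∀ (u v : V) (w : G.Walk u v), d u v ≤ wlen len w) ∧
  (∀ u v : V, ∃ w : G.Walk u v, IsShortestPath len d w)

/-- The closed ball `B_r(v)` of radius `r` around `v` (w.r.t. `d`). -/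
def cball (d : V → V → ℝ) (v : V) (r : ℝ) : Set V := {u | d u v ≤ r}

/-- A *shortest path cover* for scale `r` (with parameter `c`): a set of hubs
hitting every shortest path of length in `(r, c*r/2]`. -/
def IsSPC (G : SimpleGraph V) (len d : V → V → ℝ) (c r : ℝ) (H : Set V) : Prop :=
  ∀ (u v : V) (w : G.Walk u v), IsShortestPath len d w →
    r < wlen len w → wlen len w ≤ c * r / 2 → ∃ h ∈ H, h ∈ w.support

/-- A minimal shortest path cover: no proper subset is a shortest path cover. -/
def IsMinimalSPC (G : SimpleGraph V) (len d : V → V → ℝ) (c r : ℝ) (H : Set V) : Prop :=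
  IsSPC G len d c r H ∧ ∀ H' : Set V, H' ⊂ H → ¬ IsSPC G len d c r H'

/-- `H` is locally `s`-sparse for scale `r`: every ball of radius `c*r/2` contains
at most `s` vertices of `H`. -/
def LocallySparse (d : V → V → ℝ) (c r : ℝ) (s : ℕ) (H : Set V) : Prop :=
  ∀ v : V, (H ∩ cball d v (c * r / 2)).ncard ≤ s

/-- Definition 1: the highway dimension of `G` is at most `k` if for every scale
`r > 0` and every ball of radius `c*r`, there are at most `k` vertices in the ball
hitting all shortest paths of length more than `r` that lie inside the ball. -/
def HighwayDimLE (G : SimpleGraph V) (len d : V → V → ℝ) (c : ℝ) (k : ℕ) : Prop :=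
  ∀ r : ℝ, 0 < r → ∀ v : V, ∃ H : Set V, H ⊆ cball d v (c * r) ∧ H.ncard ≤ k ∧
    ∀ (a b : V) (w : G.Walk a b), IsShortestPath len d w →
      (∀ x ∈ w.support, x ∈ cball d v (c * r)) → r < wlen len w →
      ∃ h ∈ H, h ∈ w.support

/-- The scale `r_i = (c/4)^i` of level `i`. -/
noncomputable def rlev (c : ℝ) (i : ℕ) : ℝ := (c / 4) ^ i

/-- A *town* at level `i`, w.r.t. the fixed shortest path covers `SPC`. -/
def IsTownAt (d : V → V → ℝ) (SPC : ℕ → Set V) (c : ℝ) (i : ℕ) (T : Set V) : Prop :=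
  ∃ v : V, (∀ h ∈ SPC i, 2 * rlev c i < d v h) ∧ T = {u | d u v ≤ rlev c i}

/-- The *sprawl* at level `i`: all vertices lying in no town of level `i`. -/
def sprawl (d : V → V → ℝ) (SPC : ℕ → Set V) (c : ℝ) (i : ℕ) : Set V :=
  {u | ∀ T : Set V, IsTownAt d SPC c i T → u ∉ T}

/-- A member of the towns decomposition `𝒯`: a town at some level. -/
def IsTown (d : V → V → ℝ) (SPC : ℕ → Set V) (c : ℝ) (T : Set V) : Prop :=
  ∃ i : ℕ, IsTownAt d SPC c i T

/-- `T'` is a *child town* of `T` in the laminar family of towns: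
a maximal town strictly contained in `T`. -/
def IsChildTown (d : V → V → ℝ) (SPC : ℕ → Set V) (c : ℝ) (T' T : Set V) : Prop :=
  IsTown d SPC c T' ∧ IsTown d SPC c T ∧ T' ⊂ T ∧
    ∀ T'' : Set V, IsTown d SPC c T'' → T' ⊂ T'' → ¬ T'' ⊂ T

/-- The *core* `C_i` of a town `T` of level `j` on level `i ≤ j`:
`C j = T` and `C i = sprawl i ∩ C (i+1)` for `i < j`. -/
def townCore (d : V → V → ℝ) (SPC : ℕ → Set V) (c : ℝ) (T : Set V) (j i : ℕ) : Set V :=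
  T ∩ {u | ∀ q : ℕ, i ≤ q → q < j → u ∈ sprawl d SPC c q}

section MyAux
variable {G : SimpleGraph V} {len d : V → V → ℝ}

lemma my_wlen_nil {v : V} : wlen len (SimpleGraph.Walk.nil : G.Walk v v) = 0 := by
  simp [wlen]

lemma my_wlen_append {a b e : V} (p : G.Walk a b) (q : G.Walk b e) :
    wlen len (p.append q) = wlen len p + wlen len q := by
  simp [wlen, SimpleGraph.Walk.darts_append]

lemma my_wlen_nonneg (hlen_pos : ∀ u v : V, G.Adj u v → 0 < len u v) {a b : V} (p : G.Walk a b) :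
    0 ≤ wlen len p := by
  apply List.sum_nonneg
  intro x hx
  simp only [List.mem_map] at hx
  obtain ⟨e, he, rfl⟩ := hx
  exact (hlen_pos _ _ e.adj).le

lemma my_wlen_reverse (hlen_symm : ∀ u v : V, len u v = len v u) {a b : V} (p : G.Walk a b) :
    wlen len p.reverse = wlen len p := by
  simp [wlen, SimpleGraph.Walk.darts_reverse, List.map_reverse, List.sum_reverse, List.map_map,
    Function.comp_def]
  exact congrArg List.sum (List.map_congr_left fun e _ => hlen_symm _ _)

variable (hm : IsShortestPathMetric G len d)
include hm

lemma my_d_nonneg (hlen_pos : ∀ u v : V, G.Adj u v → 0 < len u v) (a b : V) : 0 ≤ d a b := by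
  obtain ⟨p, _, hp⟩ := hm.2 a b
  exact hp ▸ my_wlen_nonneg hlen_pos p

lemma my_d_self (hlen_pos : ∀ u v : V, G.Adj u v → 0 < len u v) (v : V) : d v v = 0 :=
  le_antisymm (by simpa [my_wlen_nil] using hm.1 v v SimpleGraph.Walk.nil)
    (my_d_nonneg hm hlen_pos v v)

lemma my_d_symm (hlen_symm : ∀ u v : V, len u v = len v u) (a b : V) : d a b = d b a := by
  have key : ∀ x y : V, d x y ≤ d y x := by
    intro x y
    obtain ⟨p, _, hp⟩ := hm.2 y x
    calc d x y ≤ wlen len p.reverse := hm.1 x y p.reverse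
    _ = wlen len p := my_wlen_reverse hlen_symm p
    _ = d y x := hp
  exact le_antisymm (key a b) (key b a)

lemma my_d_triangle (a b e : V) : d a e ≤ d a b + d b e := by
  obtain ⟨p, _, hp⟩ := hm.2 a b
  obtain ⟨q, _, hq⟩ := hm.2 b e
  calc d a e ≤ wlen len (p.append q) := hm.1 a e (p.append q)
  _ = d a b + d b e := by rw [my_wlen_append, hp, hq]

lemma my_d_split {a b h : V} (p : G.Walk a b) (hh : h ∈ p.support) :
    d a h + d h b ≤ wlen len p := by
  haveI := Classical.decEq V
  conv_rhs => rw [← SimpleGraph.Walk.take_spec p hh]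
  rw [my_wlen_append]
  exact add_le_add (hm.1 a h _) (hm.1 h b _)

lemma my_hub_split {c r : ℝ} {H : Set V} (hH : IsSPC G len d c r H) {a b : V}
    (h1 : r < d a b) (h2 : d a b ≤ c * r / 2) : ∃ h ∈ H, d a h + d h b ≤ d a b := by
  obtain ⟨p, hp⟩ := hm.2 a b
  obtain ⟨h, hhH, hhs⟩ := hH a b p hp (hp.2 ▸ h1) (hp.2 ▸ h2)
  exact ⟨h, hhH, hp.2 ▸ my_d_split hm p hhs⟩

lemma my_town_diam (hlen_symm : ∀ u v : V, len u v = len v u)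
    {c r : ℝ} (hc : 4 ≤ c) (hr : 0 < r) {H : Set V} (hH : IsSPC G len d c r H)
    {v : V} (hv : ∀ h ∈ H, 2 * r < d v h) {a b : V}
    (ha : d a v ≤ r) (hb : d b v ≤ r) : d a b ≤ r := by
  by_contra hgt
  push_neg at hgt
  have h2 : d a b ≤ 2 * r := by
    have := my_d_triangle hm a v b
    have hvb := my_d_symm hm hlen_symm v b
    linarith
  obtain ⟨h, hhH, hsplit⟩ := my_hub_split hm hH hgt (by nlinarith)
  have hd := hv h hhH
  rcases le_or_gt (d a h) r with h1 | h1
  · have ht := my_d_triangle hm v a h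
    have hva := my_d_symm hm hlen_symm v a
    linarith
  · have h3 : d h b ≤ r := by linarith
    have ht := my_d_triangle hm v b h
    have hvb := my_d_symm hm hlen_symm v b
    have hbh := my_d_symm hm hlen_symm b h
    linarith

lemma my_town_absorb (hlen_symm : ∀ u v : V, len u v = len v u)
    (hlen_pos : ∀ u v : V, G.Adj u v → 0 < len u v)
    {c r : ℝ} (hc : 4 ≤ c) (hr : 0 < r) {H : Set V} (hH : IsSPC G len d c r H)
    {v : V} (hv : ∀ h ∈ H, 2 * r < d v h) {a w : V}
    (ha : d a v ≤ r) (hw : d w a ≤ r) : d w v ≤ r := by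
  by_contra hgt
  push_neg at hgt
  have h2 : d w v ≤ 2 * r := by
    have := my_d_triangle hm w a v
    linarith
  obtain ⟨h, hhH, hsplit⟩ := my_hub_split hm hH hgt (by nlinarith)
  have hd := hv h hhH
  have hnn : 0 ≤ d w h := my_d_nonneg hm hlen_pos w h
  have hvh := my_d_symm hm hlen_symm v h
  linarith


omit hm in
lemma my_rlev_pos {c : ℝ} (hc : 4 < c) (i : ℕ) : 0 < rlev c i :=
  pow_pos (by linarith) i

omit hm in
lemma my_rlev_mono {c : ℝ} (hc : 4 < c) {i j : ℕ} (hij : i ≤ j) : rlev c i ≤ rlev c j :=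
  pow_le_pow_right₀ (by rw [le_div_iff₀ (by norm_num)]; linarith) hij

lemma my_town_nested (hlen_symm : ∀ u v : V, len u v = len v u)
    (hlen_pos : ∀ u v : V, G.Adj u v → 0 < len u v)
    {c : ℝ} (hc : 4 < c) {SPC : ℕ → Set V}
    (hSPC : ∀ i : ℕ, IsSPC G len d c (rlev c i) (SPC i))
    {i j : ℕ} (hij : i ≤ j) {T₁ T₂ : Set V}
    (h1 : IsTownAt d SPC c i T₁) (h2 : IsTownAt d SPC c j T₂)
    (hnd : ¬ Disjoint T₁ T₂) : T₁ ⊆ T₂ := by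
  obtain ⟨v1, hv1, rfl⟩ := h1
  obtain ⟨v2, hv2, rfl⟩ := h2
  obtain ⟨x, hx1, hx2⟩ := Set.not_disjoint_iff.mp hnd
  intro w hw
  simp only [Set.mem_setOf_eq] at *
  have hdi : d w x ≤ rlev c i :=
    my_town_diam hm hlen_symm hc.le (my_rlev_pos hc i) (hSPC i) hv1 hw hx1
  exact my_town_absorb hm hlen_symm hlen_pos hc.le (my_rlev_pos hc j) (hSPC j) hv2 hx2
    (hdi.trans (my_rlev_mono hc hij))

lemma my_SPC0_empty (hlen_pos : ∀ u v : V, G.Adj u v → 0 < len u v)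
    {c : ℝ} (hc : 4 < c) {SPC : ℕ → Set V}
    (hSPC : IsMinimalSPC G len d c (rlev c 0) (SPC 0))
    (hscale : ∀ u v : V, u ≠ v → c / 2 < d u v) : SPC 0 = ∅ := by
  by_contra hne
  refine hSPC.2 ∅ (Set.ssubset_iff_of_subset (Set.empty_subset _) |>.mpr ?_) ?_
  · obtain ⟨x, hx⟩ := Set.nonempty_iff_ne_empty.mpr hne
    exact ⟨x, hx, fun h => h⟩
  · intro a b p hp h1 h2
    exfalso
    rcases eq_or_ne a b with rfl | hab
    · have : d a a = 0 := my_d_self hm hlen_pos a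
      rw [rlev, pow_zero] at h1
      rw [hp.2, this] at h1
      linarith
    · have := hscale a b hab
      rw [rlev, pow_zero, mul_one] at h2
      rw [hp.2] at h2
      linarith

lemma my_singleton_town (hlen_pos : ∀ u v : V, G.Adj u v → 0 < len u v)
    {c : ℝ} (hc : 4 < c) {SPC : ℕ → Set V}
    (h0 : SPC 0 = ∅)
    (hscale : ∀ u v : V, u ≠ v → c / 2 < d u v) (x : V) :
    IsTownAt d SPC c 0 {x} := by
  refine ⟨x, by simp [h0], ?_⟩
  ext w
  simp only [Set.mem_singleton_iff, Set.mem_setOf_eq, rlev, pow_zero]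
  constructor
  · rintro rfl
    rw [my_d_self hm hlen_pos]
    norm_num
  · intro hw
    by_contra hne
    have := hscale w x hne
    linarith

lemma my_center_mem (hlen_pos : ∀ u v : V, G.Adj u v → 0 < len u v)
    {c : ℝ} (hc : 4 < c) {SPC : ℕ → Set V} {i : ℕ} {T : Set V}
    (hT : IsTownAt d SPC c i T) : T.Nonempty := by
  obtain ⟨v, hv, rfl⟩ := hT
  exact ⟨v, by simp only [Set.mem_setOf_eq, my_d_self hm hlen_pos]; exact (my_rlev_pos hc i).le⟩

end MyAux


/-- Lemma 7 of the paper: the towns of all levels form a laminar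
family (any two are nested or disjoint); moreover a town of level `i` has either 0
or at least 2 child towns, and every child town of it is a town on a level
strictly below `i`. -/
theorem statement3 {V : Type} [Fintype V] (G : SimpleGraph V) (len d : V → V → ℝ)
    (hlen_symm : ∀ u v : V, len u v = len v u)
    (hlen_pos : ∀ u v : V, G.Adj u v → 0 < len u v)
    (hmetric : IsShortestPathMetric G len d)
    (c : ℝ) (hc : 4 < c)
    (SPC : ℕ → Set V)
    (hSPC : ∀ i : ℕ, IsMinimalSPC G len d c (rlev c i) (SPC i))
    (hscale : ∀ u v : V, u ≠ v → c / 2 < d u v) :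
    (∀ T₁ T₂ : Set V, IsTown d SPC c T₁ → IsTown d SPC c T₂ →
      T₁ ⊆ T₂ ∨ T₂ ⊆ T₁ ∨ Disjoint T₁ T₂) ∧
    (∀ (i : ℕ) (T : Set V), IsTownAt d SPC c i T →
      (∀ T' : Set V, IsChildTown d SPC c T' T →
        ∃ T'' : Set V, IsChildTown d SPC c T'' T ∧ T'' ≠ T') ∧
      (∀ T' : Set V, IsChildTown d SPC c T' T →
        ∃ i' : ℕ, i' < i ∧ IsTownAt d SPC c i' T')) := by
  
  have hm := hmetric
  have hSPC' : ∀ i, IsSPC G len d c (rlev c i) (SPC i) := fun i => (hSPC i).1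
  have h0 : SPC 0 = ∅ := my_SPC0_empty hm hlen_pos hc (hSPC 0) hscale
  have laminar : ∀ T₁ T₂ : Set V, IsTown d SPC c T₁ → IsTown d SPC c T₂ →
      T₁ ⊆ T₂ ∨ T₂ ⊆ T₁ ∨ Disjoint T₁ T₂ := by
    rintro T₁ T₂ ⟨i, h1⟩ ⟨j, h2⟩
    by_cases hd : Disjoint T₁ T₂
    · exact Or.inr (Or.inr hd)
    rcases le_total i j with hij | hij
    · exact Or.inl (my_town_nested hm hlen_symm hlen_pos hc hSPC' hij h1 h2 hd)
    · exact Or.inr (Or.inl (my_town_nested hm hlen_symm hlen_pos hc hSPC' hij h2 h1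
        (fun h => hd h.symm)))
  refine ⟨laminar, fun i T hT => ⟨?_, ?_⟩⟩
  · intro T' hT'
    obtain ⟨u, huT, huT'⟩ := Set.exists_of_ssubset hT'.2.2.1
    have hu_town : IsTownAt d SPC c 0 {u} := my_singleton_town hm hlen_pos hc h0 hscale u
    have hTu : ({u} : Set V) ⊂ T := by
      constructor
      · simpa using huT
      · intro hsub
        obtain ⟨j, hj⟩ := hT'.1
        obtain ⟨x, hx⟩ := my_center_mem hm hlen_pos hc hj
        have hxu : x = u := hsub (hT'.2.2.1.subset hx)
        exact huT' (hxu ▸ hx)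
    set S : Set (Set V) := {A : Set V | IsTown d SPC c A ∧ u ∈ A ∧ A ⊂ T} with hS
    have hfin : S.Finite := Set.toFinite S
    have hne : S.Nonempty := ⟨{u}, ⟨0, hu_town⟩, rfl, hTu⟩
    obtain ⟨T'', hT''S, hmax⟩ := Set.Finite.exists_maximalFor id S hfin hne
    refine ⟨T'', ⟨hT''S.1, ⟨i, hT⟩, hT''S.2.2, ?_⟩, ?_⟩
    · intro T₃ h3town h3ss h3sub
      have h3S : T₃ ∈ S := ⟨h3town, h3ss.subset hT''S.2.1, h3sub⟩
      exact h3ss.not_subset (hmax h3S h3ss.subset)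
    · intro heq
      exact huT' (heq ▸ hT''S.2.1)
  · intro T' hT'
    obtain ⟨j, hj⟩ := hT'.1
    refine ⟨j, ?_, hj⟩
    by_contra hij
    push_neg at hij
    have hnd : ¬ Disjoint T T' := by
      obtain ⟨x, hx⟩ := my_center_mem hm hlen_pos hc hj
      exact Set.not_disjoint_iff.mpr ⟨x, hT'.2.2.1.subset hx, hx⟩
    exact hT'.2.2.1.not_subset (my_town_nested hm hlen_symm hlen_pos hc hSPC' hij hT hj hnd)
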